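/- Assume ℙ(S_F) = 1. Then the map ρ̂ : S_F → graph ρ, ρ̂(ϑ) = (ϑ, ρ(ϑ)), realizes a measure-theoretic isomorphism between (σ, ℙ) and (F, v_ℙ): σ(S_F) ⊆ S_F and F(graph ρ) ⊆ graph ρ; ρ̂ is a measurable bijection from S_F onto graph ρ whose inverse (ϑ, x) ↦ ϑ is measurable; F ∘ ρ̂ = ρ̂ ∘ σ on S_F; ρ̂_* ℙ = v_ℙ; and ℙ(S_F) = 1 = v_ℙ(graph ρ). -/

import Mathlib

open Set Function Filter Topology MeasureTheory

noncomputable section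

/-- The shift map on two-sided sequences. -/
def shiftMap {k : ℕ} (θ : ℤ → Fin k) : ℤ → Fin k := fun i => θ (i + 1)

/-- The step skew product `F(θ, x) = (σ θ, f_{θ₀} x)`. -/
def skewProd {k : ℕ} {M : Type*} (f : Fin k → M → M) :
    (ℤ → Fin k) × M → (ℤ → Fin k) × M :=
  fun p => (shiftMap p.1, f (p.1 0) p.2)

/-- Backward composition `f_{θ₋₁} ∘ ⋯ ∘ f_{θ₋ₙ}`. -/
def bcomp {k : ℕ} {M : Type*} (f : Fin k → M → M) (θ : ℤ → Fin k) : ℕ → M → M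
  | 0 => id
  | n + 1 => bcomp f θ n ∘ f (θ (-((n : ℤ) + 1)))

/-- The spine `I_θ = ⋂_{n ≥ 1} f_{θ₋₁} ∘ ⋯ ∘ f_{θ₋ₙ}(M)`. -/
def spine {k : ℕ} {M : Type*} (f : Fin k → M → M) (θ : ℤ → Fin k) : Set M :=
  ⋂ n : ℕ, bcomp f θ (n + 1) '' Set.univ

/-- The set of weakly hyperbolic sequences: those `θ` whose spine is a singleton. -/
def weakHyp {k : ℕ} {M : Type*} (f : Fin k → M → M) : Set (ℤ → Fin k) :=
  {θ | ∃ x : M, spine f θ = {x}}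

/-- The ω-limit set of a point `z` under iteration of `F`: limits of subsequences
`F^{n_j}(z)` with `n_j → ∞`. -/
def omegaLim {α : Type*} [TopologicalSpace α] (F : α → α) (z : α) : Set α :=
  {w | ∃ φ : ℕ → ℕ, StrictMono φ ∧ Tendsto (fun j => F^[φ j] z) atTop (𝓝 w)}



lemma bcomp_continuous {k : ℕ} {M : Type*} [TopologicalSpace M]
    (f : Fin k → M → M) (hf : ∀ i, Continuous (f i)) (θ : ℤ → Fin k) :
    ∀ n, Continuous (bcomp f θ n)
  | 0 => continuous_id
  | n + 1 => (bcomp_continuous f hf θ n).comp (hf _)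

lemma bcomp_shift {k : ℕ} {M : Type*} (f : Fin k → M → M) (θ : ℤ → Fin k) :
    ∀ n, bcomp f (shiftMap θ) (n + 1) = f (θ 0) ∘ bcomp f θ n := by
  intro n
  induction n with
  | zero =>
    show bcomp f (shiftMap θ) 0 ∘ f (shiftMap θ (-(0 + 1))) = _
    simp [bcomp, shiftMap]
  | succ n ih =>
    show bcomp f (shiftMap θ) (n + 1) ∘ f (shiftMap θ (-((n : ℤ) + 1 + 1))) = _
    rw [ih]
    have : shiftMap θ (-((n : ℤ) + 1 + 1)) = θ (-((n : ℤ) + 1)) := by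
      simp only [shiftMap]; norm_num
    rw [this]
    rfl

lemma spine_shift {k : ℕ} {M : Type*} [MetricSpace M] [CompactSpace M]
    (f : Fin k → M → M) (hf : ∀ i, Continuous (f i)) (θ : ℤ → Fin k)
    (x : M) (hx : spine f θ = {x}) :
    spine f (shiftMap θ) = {f (θ 0) x} := by
  set A : ℕ → Set M := fun n => bcomp f θ n '' Set.univ with hA
  have hAcomp : ∀ n, IsCompact (A n) := fun n =>
    isCompact_univ.image (bcomp_continuous f hf θ n)
  have hAanti : Antitone A := by
    apply antitone_nat_of_succ_le
    intro n
    show bcomp f θ (n + 1) '' Set.univ ⊆ bcomp f θ n '' Set.univ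
    rw [show bcomp f θ (n + 1) = bcomp f θ n ∘ f (θ (-((n : ℤ) + 1))) from rfl,
      Set.image_comp]
    exact Set.image_mono (Set.subset_univ _)
  have hspine' : spine f (shiftMap θ) = ⋂ n : ℕ, f (θ 0) '' A n := by
    unfold spine
    exact Set.iInter_congr fun n => by rw [bcomp_shift f θ n, Set.image_comp]
  have hxA : ∀ n, x ∈ A n := by
    intro n
    cases n with
    | zero => exact ⟨x, Set.mem_univ x, rfl⟩
    | succ m =>
      have : x ∈ spine f θ := hx ▸ rfl
      exact Set.mem_iInter.1 this m
  rw [hspine']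
  apply Set.Subset.antisymm
  · intro y hy
    have hyn : ∀ n, ∃ z ∈ A n, f (θ 0) z = y := by
      intro n
      obtain ⟨z, hz, hz'⟩ := Set.mem_iInter.1 hy n
      exact ⟨z, hz, hz'⟩
    choose u hu hu' using hyn
    obtain ⟨z, -, φ, hφ, hlim⟩ := isCompact_univ.tendsto_subseq
      (fun n => Set.mem_univ (u n))
    have hzA : ∀ m, z ∈ A m := by
      intro m
      refine (hAcomp m).isClosed.mem_of_tendsto hlim ?_
      filter_upwards [Filter.eventually_ge_atTop m] with j hj
      exact hAanti (hj.trans (hφ.le_apply)) (hu (φ j))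
    have hzx : z = x := by
      have : z ∈ spine f θ := Set.mem_iInter.2 fun n => hzA (n + 1)
      rw [hx] at this
      exact this
    have : Filter.Tendsto (fun j => f (θ 0) (u (φ j))) Filter.atTop (𝓝 (f (θ 0) z)) :=
      ((hf (θ 0)).tendsto z).comp hlim
    have h2 : Filter.Tendsto (fun j => f (θ 0) (u (φ j))) Filter.atTop (𝓝 y) := by
      simp only [hu']
      exact tendsto_const_nhds
    have := tendsto_nhds_unique this h2
    rw [hzx] at this
    exact this ▸ rfl
  · intro y hy
    rw [Set.mem_singleton_iff] at hy
    subst hy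
    exact Set.mem_iInter.2 fun n => ⟨x, hxA n, rfl⟩

/-- If `ℙ(S_F) = 1`, the map `ρ̂(θ) = (θ, ρ(θ))` realizes a measure-theoretic
isomorphism between `(σ, ℙ)` and `(F, v_ℙ)`: `σ(S_F) ⊆ S_F`, `F(graph ρ) ⊆ graph ρ`,
`ρ̂` is a measurable bijection from `S_F` onto `graph ρ` with measurable inverse
(the projection), `F ∘ ρ̂ = ρ̂ ∘ σ` on `S_F`, and `v_ℙ(graph ρ) = 1 = ℙ(S_F)`. -/
theorem coding_map_isomorphism
    {k : ℕ} (hk : 1 ≤ k) {M : Type*} [MetricSpace M] [CompactSpace M] [Nonempty M]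
    [MeasurableSpace M] [BorelSpace M]
    (f : Fin k → M → M) (hf : ∀ i, Continuous (f i))
    (ℙ : Measure (ℤ → Fin k)) [IsProbabilityMeasure ℙ]
    (hinv : Measure.map shiftMap ℙ = ℙ)
    (hS : ℙ (weakHyp f) = 1)
    (ρ : (ℤ → Fin k) → M) (hρ : ∀ θ ∈ weakHyp f, spine f θ = {ρ θ})
    (hρm : Measurable ρ) :
    Set.MapsTo shiftMap (weakHyp f) (weakHyp f) ∧
      Set.MapsTo (skewProd f) ((fun θ => (θ, ρ θ)) '' weakHyp f)
        ((fun θ => (θ, ρ θ)) '' weakHyp f) ∧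
      Set.BijOn (fun θ => (θ, ρ θ)) (weakHyp f) ((fun θ => (θ, ρ θ)) '' weakHyp f) ∧
      Measurable (fun θ => (θ, ρ θ) : (ℤ → Fin k) → (ℤ → Fin k) × M) ∧
      Measurable (Prod.fst : (ℤ → Fin k) × M → (ℤ → Fin k)) ∧
      (∀ θ ∈ weakHyp f, skewProd f (θ, ρ θ) = (shiftMap θ, ρ (shiftMap θ))) ∧
      Measure.map (fun θ => (θ, ρ θ)) ℙ ((fun θ => (θ, ρ θ)) '' weakHyp f) = 1    := by
  classical
  have key : ∀ θ ∈ weakHyp f, shiftMap θ ∈ weakHyp f ∧ ρ (shiftMap θ) = f (θ 0) (ρ θ) := by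
    intro θ hθ
    have hsp := spine_shift f hf θ (ρ θ) (hρ θ hθ)
    have hmem : shiftMap θ ∈ weakHyp f := ⟨f (θ 0) (ρ θ), hsp⟩
    refine ⟨hmem, ?_⟩
    have := (hρ _ hmem).symm.trans hsp
    exact (Set.singleton_eq_singleton_iff.1 this)
  have hmapsTo : Set.MapsTo shiftMap (weakHyp f) (weakHyp f) :=
    fun θ hθ => (key θ hθ).1
  have hconj : ∀ θ ∈ weakHyp f, skewProd f (θ, ρ θ) = (shiftMap θ, ρ (shiftMap θ)) := by
    intro θ hθ
    simp only [skewProd, (key θ hθ).2]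
  have hinj : Function.Injective (fun θ : ℤ → Fin k => (θ, ρ θ)) :=
    fun a b h => congrArg Prod.fst h
  have hmeas : Measurable (fun θ => (θ, ρ θ) : (ℤ → Fin k) → (ℤ → Fin k) × M) :=
    measurable_id.prodMk hρm
  refine ⟨hmapsTo, ?_, hinj.injOn.bijOn_image, hmeas, measurable_fst, hconj, ?_⟩
  · rintro p ⟨θ, hθ, rfl⟩
    rw [hconj θ hθ]
    exact ⟨shiftMap θ, hmapsTo hθ, rfl⟩
  · have hprob : IsProbabilityMeasure (Measure.map (fun θ => (θ, ρ θ)) ℙ) :=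
      Measure.isProbabilityMeasure_map hmeas.aemeasurable
    refine le_antisymm prob_le_one ?_
    calc (1 : ENNReal) = ℙ (weakHyp f) := hS.symm
      _ ≤ ℙ ((fun θ => (θ, ρ θ)) ⁻¹' ((fun θ => (θ, ρ θ)) '' weakHyp f)) :=
          measure_mono (Set.subset_preimage_image _ _)
      _ ≤ Measure.map (fun θ => (θ, ρ θ)) ℙ ((fun θ => (θ, ρ θ)) '' weakHyp f) :=
          Measure.le_map_apply hmeas.aemeasurable _
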